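/- If B ⊆ Σⁿ is (1,1)-guaranteed, then B is (r,r)-guaranteed for every integer r ≥ 1. -/

import Mathlib

/-- Costs of the edit operations (as in the former Mathlib `Levenshtein.Cost`). -/
structure Levenshtein.Cost (α β δ : Type*) where
  delete : α → δ
  insert : β → δ
  substitute : α → β → δ

/-- Unit costs (as in the former Mathlib `Levenshtein.defaultCost`). -/
def Levenshtein.defaultCost {α : Type*} [DecidableEq α] : Levenshtein.Cost α α ℕ where
  delete _ := 1
  insert _ := 1
  substitute a b := if a = b then 0 else 1

/-- Levenshtein distance with costs `C` (the recursion characterizing the former Mathlib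
`levenshtein`). -/
def levenshtein {α β δ : Type*} [Zero δ] [Add δ] [Min δ] (C : Levenshtein.Cost α β δ) :
    List α → List β → δ
  | [], [] => 0
  | [], y :: ys => C.insert y + levenshtein C [] ys
  | x :: xs, [] => C.delete x + levenshtein C xs []
  | x :: xs, y :: ys =>
    min (C.delete x + levenshtein C xs (y :: ys))
      (min (C.insert y + levenshtein C (x :: xs) ys) (C.substitute x y + levenshtein C xs ys))

@[simp]
theorem Levenshtein.defaultCost_delete {α : Type*} [DecidableEq α] (a : α) :
    (Levenshtein.defaultCost : Levenshtein.Cost α α ℕ).delete a = 1 := rfl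

@[simp]
theorem Levenshtein.defaultCost_insert {α : Type*} [DecidableEq α] (a : α) :
    (Levenshtein.defaultCost : Levenshtein.Cost α α ℕ).insert a = 1 := rfl

@[simp]
theorem Levenshtein.defaultCost_substitute {α : Type*} [DecidableEq α] (a b : α) :
    (Levenshtein.defaultCost : Levenshtein.Cost α α ℕ).substitute a b = if a = b then 0 else 1 :=
  rfl

@[simp]
theorem levenshtein_nil_nil {α β δ : Type*} [Zero δ] [Add δ] [Min δ]
    (C : Levenshtein.Cost α β δ) : levenshtein C ([] : List α) ([] : List β) = 0 := by
  rw [levenshtein]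

@[simp]
theorem levenshtein_nil_cons {α β δ : Type*} [Zero δ] [Add δ] [Min δ]
    (C : Levenshtein.Cost α β δ) (y : β) (ys : List β) :
    levenshtein C ([] : List α) (y :: ys) = C.insert y + levenshtein C [] ys := by
  rw [levenshtein]

@[simp]
theorem levenshtein_cons_nil {α β δ : Type*} [Zero δ] [Add δ] [Min δ]
    (C : Levenshtein.Cost α β δ) (x : α) (xs : List α) :
    levenshtein C (x :: xs) ([] : List β) = C.delete x + levenshtein C xs [] := by
  rw [levenshtein]

theorem levenshtein_cons_cons {α β δ : Type*} [Zero δ] [Add δ] [Min δ]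
    (C : Levenshtein.Cost α β δ) (x : α) (xs : List α) (y : β) (ys : List β) :
    levenshtein C (x :: xs) (y :: ys) =
      min (C.delete x + levenshtein C xs (y :: ys))
        (min (C.insert y + levenshtein C (x :: xs) ys) (C.substitute x y + levenshtein C xs ys)) := by
  rw [levenshtein]


/-- Edit (Levenshtein) distance between two length-`n` sequences over `α`. -/
def editDist {α : Type*} [DecidableEq α] {n : ℕ} (s t : Fin n → α) : ℕ :=
  levenshtein Levenshtein.defaultCost (List.ofFn s) (List.ofFn t)

/-- `B` is a `(d, r)`-guaranteed subset of `Σⁿ`: for every pair of sequences within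
edit distance `d`, some sequence of `B` lies in both of their `r`-neighborhoods. -/
def IsGuaranteed {α : Type*} [DecidableEq α] {n : ℕ} (d r : ℕ)
    (B : Set (Fin n → α)) : Prop :=
  ∀ s t : Fin n → α, editDist s t ≤ d →
    ∃ v ∈ B, editDist s v ≤ r ∧ editDist t v ≤ r

namespace Stmt14Aux

variable {α : Type*} [DecidableEq α]

local notation "lev" => levenshtein Levenshtein.defaultCost

theorem lev_nil_left (ys : List α) : lev ([] : List α) ys = ys.length := by
  induction ys with
  | nil => simp
  | cons y ys ih => simp [ih, Nat.add_comm]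

theorem lev_nil_right (xs : List α) : lev xs ([] : List α) = xs.length := by
  induction xs with
  | nil => simp
  | cons x xs ih => simp [ih, Nat.add_comm]

theorem lev_self (xs : List α) : lev xs xs = 0 := by
  induction xs with
  | nil => simp
  | cons x xs ih => simp [levenshtein_cons_cons, ih]

theorem lev_le_ins (l : List α) (y : α) (m : List α) :
    lev l (y :: m) ≤ 1 + lev l m := by
  cases l with
  | nil => simp [lev_nil_left, Nat.add_comm]
  | cons x xs =>
    rw [levenshtein_cons_cons]
    simpa using le_trans (min_le_right _ _) (min_le_left _ _)

theorem lev_le_del (x : α) (xs ys : List α) :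
    lev (x :: xs) ys ≤ 1 + lev xs ys := by
  cases ys with
  | nil => simp [lev_nil_right, Nat.add_comm]
  | cons y ys =>
    rw [levenshtein_cons_cons]
    simpa using min_le_left _ _

theorem lev_le_sub (x y : α) (xs ys : List α) :
    lev (x :: xs) (y :: ys) ≤ (if x = y then 0 else 1) + lev xs ys := by
  rw [levenshtein_cons_cons]
  simpa using le_trans (min_le_right _ _) (min_le_right _ _)

theorem lev_eq_zero : ∀ {xs ys : List α}, lev xs ys = 0 → xs = ys := by
  intro xs
  induction xs with
  | nil =>
    intro ys h
    cases ys with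
    | nil => rfl
    | cons y ys => simp [lev_nil_left] at h
  | cons x xs ih =>
    intro ys h
    cases ys with
    | nil => simp [lev_nil_right] at h
    | cons y ys =>
      rw [levenshtein_cons_cons] at h
      by_cases hxy : x = y
      · simp only [Levenshtein.defaultCost_substitute, if_pos hxy,
          Levenshtein.defaultCost_delete, Levenshtein.defaultCost_insert] at h
        have h0 : lev xs ys = 0 := by omega
        rw [hxy, ih h0]
      · simp only [Levenshtein.defaultCost_substitute, if_neg hxy,
          Levenshtein.defaultCost_delete, Levenshtein.defaultCost_insert] at h
        omega

theorem lev_comm : ∀ (xs ys : List α), lev xs ys = lev ys xs := by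
  intro xs
  induction xs with
  | nil =>
    intro ys
    rw [lev_nil_left, lev_nil_right]
  | cons x xs ihx =>
    intro ys
    induction ys with
    | nil => rw [lev_nil_left, lev_nil_right]
    | cons y ys ihy =>
      rw [levenshtein_cons_cons, levenshtein_cons_cons]
      have h1 := ihx (y :: ys)
      have h2 := ihy
      have h3 := ihx ys
      simp only [Levenshtein.defaultCost_delete, Levenshtein.defaultCost_insert,
        Levenshtein.defaultCost_substitute]
      by_cases hxy : x = y
      · rw [if_pos hxy, if_pos hxy.symm]
        omega
      · rw [if_neg hxy, if_neg (Ne.symm hxy)]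
        omega

/-- If two equal-length lists are at Levenshtein distance at most 1, they are
equal or differ by a single substitution. -/
theorem lev_le_one : ∀ {xs ys : List α}, xs.length = ys.length → lev xs ys ≤ 1 →
    xs = ys ∨ ∃ i < xs.length, ∃ c, ys = xs.set i c := by
  intro xs
  induction xs with
  | nil =>
    intro ys hl _
    cases ys with
    | nil => exact Or.inl rfl
    | cons y ys => simp at hl
  | cons x xs ih =>
    intro ys hl h
    cases ys with
    | nil => simp at hl
    | cons y ys =>
      rw [levenshtein_cons_cons] at h
      simp only [Levenshtein.defaultCost_delete, Levenshtein.defaultCost_insert,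
        Levenshtein.defaultCost_substitute] at h
      have hl' : xs.length = ys.length := by simpa using hl
      have hdel : ¬ (lev xs (y :: ys) = 0) := fun h0 => by
        have := lev_eq_zero h0
        apply_fun List.length at this
        simp [hl'] at this
      have hins : ¬ (lev (x :: xs) ys = 0) := fun h0 => by
        have := lev_eq_zero h0
        apply_fun List.length at this
        simp [hl'] at this
      by_cases hxy : x = y
      · rw [if_pos hxy] at h
        have hsub : lev xs ys ≤ 1 := by omega
        rcases ih hl' hsub with heq | ⟨i, hi, c, hset⟩
        · exact Or.inl (by rw [hxy, heq])
        · refine Or.inr ⟨i + 1, by simpa using hi, c, ?_⟩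
          rw [hxy, hset]
          rfl
      · rw [if_neg hxy] at h
        have hsub : lev xs ys = 0 := by omega
        have := lev_eq_zero hsub
        exact Or.inr ⟨0, by simp, y, by rw [← this]; rfl⟩

/-- If `lev xs ys ≥ 1` and `ys` is no longer than `xs`, there is a position of `xs`
that can be changed arbitrarily without increasing the distance to `ys`. -/
theorem exists_good_set : ∀ (ys xs : List α), ys.length ≤ xs.length → 1 ≤ lev xs ys →
    ∃ i < xs.length, ∀ c, lev (xs.set i c) ys ≤ lev xs ys := by
  intro ys
  induction ys with
  | nil =>
    intro xs _ h1
    cases xs with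
    | nil => simp at h1
    | cons x xs =>
      refine ⟨0, by simp, fun c => ?_⟩
      rw [show (x :: xs).set 0 c = c :: xs from rfl]
      simp [lev_nil_right]
  | cons y ys ih =>
    intro xs hlen h1
    cases xs with
    | nil => simp at hlen
    | cons x xs =>
      have hkey : lev (x :: xs) (y :: ys) = 1 + lev xs (y :: ys) ∨
          lev (x :: xs) (y :: ys) = 1 + lev (x :: xs) ys ∨
          lev (x :: xs) (y :: ys) = (if x = y then 0 else 1) + lev xs ys := by
        rw [levenshtein_cons_cons]
        simp only [Levenshtein.defaultCost_delete, Levenshtein.defaultCost_insert,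
          Levenshtein.defaultCost_substitute]
        by_cases hxy : x = y <;> [rw [if_pos hxy]; rw [if_neg hxy]] <;> omega
      rcases hkey with hd | hi | hs
      · -- delete branch: change position 0
        refine ⟨0, by simp, fun c => ?_⟩
        rw [show (x :: xs).set 0 c = c :: xs from rfl, hd]
        rw [levenshtein_cons_cons]
        simpa using min_le_left _ _
      · -- insert branch: recurse on (x :: xs, ys)
        have hlen' : ys.length ≤ (x :: xs).length := by
          simp only [List.length_cons] at hlen ⊢
          omega
        have h1' : 1 ≤ lev (x :: xs) ys := by
          rcases Nat.eq_zero_or_pos (lev (x :: xs) ys) with h0 | h0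
          · exfalso
            have := lev_eq_zero h0
            apply_fun List.length at this
            simp only [List.length_cons] at this hlen
            omega
          · exact h0
        obtain ⟨i, hilt, hgood⟩ := ih (x :: xs) hlen' h1'
        refine ⟨i, hilt, fun c => ?_⟩
        calc lev ((x :: xs).set i c) (y :: ys) ≤ 1 + lev ((x :: xs).set i c) ys :=
              lev_le_ins _ _ _
          _ ≤ 1 + lev (x :: xs) ys := by have := hgood c; omega
          _ = lev (x :: xs) (y :: ys) := hi.symm
      · by_cases hxy : x = y
        · -- matched heads: recurse on (xs, ys)
          rw [if_pos hxy] at hs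
          have hlen' : ys.length ≤ xs.length := by simpa using hlen
          have h1' : 1 ≤ lev xs ys := by omega
          obtain ⟨i, hilt, hgood⟩ := ih xs hlen' h1'
          refine ⟨i + 1, by simpa using hilt, fun c => ?_⟩
          rw [show (x :: xs).set (i + 1) c = x :: xs.set i c from rfl, hs]
          calc lev (x :: xs.set i c) (y :: ys)
              ≤ (if x = y then 0 else 1) + lev (xs.set i c) ys := lev_le_sub _ _ _ _
            _ ≤ 0 + lev xs ys := by rw [if_pos hxy]; have := hgood c; omega
            _ = 0 + lev xs ys := rfl
        · -- mismatched heads: change position 0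
          rw [if_neg hxy] at hs
          refine ⟨0, by simp, fun c => ?_⟩
          rw [show (x :: xs).set 0 c = c :: xs from rfl, hs]
          calc lev (c :: xs) (y :: ys) ≤ (if c = y then 0 else 1) + lev xs ys :=
                lev_le_sub _ _ _ _
            _ ≤ 1 + lev xs ys := by split <;> omega


theorem lev_set_le (xs : List α) (i : ℕ) (c : α) : lev xs (xs.set i c) ≤ 1 := by
  induction xs generalizing i with
  | nil => simp [lev_self]
  | cons x xs ih =>
    cases i with
    | zero =>
      rw [show (x :: xs).set 0 c = c :: xs from rfl]
      calc lev (x :: xs) (c :: xs) ≤ (if x = c then 0 else 1) + lev xs xs :=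
            lev_le_sub _ _ _ _
        _ ≤ 1 := by rw [lev_self]; split <;> omega
    | succ i =>
      rw [show (x :: xs).set (i + 1) c = x :: xs.set i c from rfl]
      calc lev (x :: xs) (x :: xs.set i c)
          ≤ (if x = x then 0 else 1) + lev xs (xs.set i c) := lev_le_sub _ _ _ _
        _ ≤ 1 := by rw [if_pos rfl]; have := ih i; omega

theorem ofFn_eq_set {n : ℕ} (s v : Fin n → α) (i : Fin n)
    (h : ∀ j, j ≠ i → v j = s j) :
    List.ofFn v = (List.ofFn s).set (i : ℕ) (v i) := by
  apply List.ext_getElem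
  · simp
  · intro j hj hj'
    simp only [List.length_ofFn] at hj
    rw [List.getElem_ofFn, List.getElem_set]
    split
    · next hij =>
      have : (⟨j, hj⟩ : Fin n) = i := by
        apply Fin.ext
        simp [← hij]
      rw [this]
    · next hij =>
      rw [List.getElem_ofFn]
      apply h
      intro hcon
      apply hij
      rw [← hcon]

theorem set_pointwise {n : ℕ} (s v : Fin n → α) (k : ℕ) (c : α)
    (h : List.ofFn v = (List.ofFn s).set k c) :
    ∀ j : Fin n, (j : ℕ) ≠ k → v j = s j := by
  intro j hjk
  have h1 := List.getElem_of_eq h (i := (j : ℕ)) (by simp)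
  rw [List.getElem_ofFn, List.getElem_set] at h1
  rw [if_neg (fun hc => hjk hc.symm)] at h1
  rw [List.getElem_ofFn] at h1
  simpa using h1

theorem line_meets {n : ℕ} [Fintype α] (hα : 1 < Fintype.card α)
    (B : Set (Fin n → α)) (hB : IsGuaranteed 1 1 B) (s : Fin n → α) (i : Fin n) :
    ∃ v ∈ B, ∀ j, j ≠ i → v j = s j := by
  obtain ⟨b, hb⟩ := Fintype.exists_ne_of_one_lt_card hα (s i)
  set t : Fin n → α := Function.update s i b with ht
  have htup : ∀ j, j ≠ i → t j = s j := fun j hj => Function.update_of_ne hj _ _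
  have hti : t i = b := Function.update_self _ _ _
  have hst : editDist s t ≤ 1 := by
    show lev (List.ofFn s) (List.ofFn t) ≤ 1
    rw [ofFn_eq_set s t i htup]
    exact lev_set_le _ _ _
  obtain ⟨v, hvB, hsv, htv⟩ := hB s t hst
  refine ⟨v, hvB, ?_⟩
  have hsv' := lev_le_one (xs := List.ofFn s) (ys := List.ofFn v) (by simp) hsv
  have htv' := lev_le_one (xs := List.ofFn t) (ys := List.ofFn v) (by simp) htv
  rcases hsv' with heq | ⟨k, hk, c, hset⟩
  · have : s = v := List.ofFn_injective heq
    intro j _; rw [← this]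
  · have hvs : ∀ j : Fin n, (j : ℕ) ≠ k → v j = s j := set_pointwise s v k c hset
    intro j hji
    by_cases hjk : (j : ℕ) = k
    · by_contra hne
      have hvjt : v j ≠ t j := by rw [htup j hji]; exact hne
      rcases htv' with heq2 | ⟨k', hk', c', hset'⟩
      · exact hvjt (by rw [List.ofFn_injective heq2])
      · have hvt : ∀ l : Fin n, (l : ℕ) ≠ k' → v l = t l := set_pointwise t v k' c' hset'
        have hjk' : (j : ℕ) = k' := by
          by_contra hcon
          exact hvjt (hvt j hcon)
        have hik' : (i : ℕ) ≠ k' := by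
          rw [← hjk']
          intro hc
          exact hji (Fin.ext hc.symm)
        have hik : (i : ℕ) ≠ k := by
          rw [← hjk]
          intro hc
          exact hji (Fin.ext hc.symm)
        have h1 : v i = s i := hvs i hik
        have h2 : v i = t i := hvt i hik'
        rw [h1, hti] at h2
        exact hb h2.symm
    · exact hvs j hjk

end Stmt14Aux

theorem stmt14 {α : Type*} [Fintype α] [DecidableEq α] (hα : 1 < Fintype.card α)
    {n : ℕ} (B : Set (Fin n → α)) (hB : IsGuaranteed 1 1 B) :
    ∀ r : ℕ, 1 ≤ r → IsGuaranteed r r B := by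
  intro r hr s t hst
  by_cases h0 : editDist s t = 0
  · have hster : s = t := List.ofFn_injective (Stmt14Aux.lev_eq_zero h0)
    subst hster
    obtain ⟨v, hvB, hsv, _⟩ := hB s s (by
      show levenshtein Levenshtein.defaultCost (List.ofFn s) (List.ofFn s) ≤ 1
      rw [Stmt14Aux.lev_self]; omega)
    exact ⟨v, hvB, hsv.trans hr, hsv.trans hr⟩
  · have h1 : 1 ≤ editDist s t := Nat.one_le_iff_ne_zero.2 h0
    obtain ⟨i, hi, hgood⟩ :=
      Stmt14Aux.exists_good_set (List.ofFn t) (List.ofFn s) (by simp) h1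
    have hin : i < n := by simpa using hi
    obtain ⟨v, hvB, hv⟩ := Stmt14Aux.line_meets hα B hB s ⟨i, hin⟩
    have hofn : List.ofFn v = (List.ofFn s).set i (v ⟨i, hin⟩) :=
      Stmt14Aux.ofFn_eq_set s v ⟨i, hin⟩ hv
    refine ⟨v, hvB, ?_, ?_⟩
    · have : editDist s v ≤ 1 := by
        show levenshtein Levenshtein.defaultCost (List.ofFn s) (List.ofFn v) ≤ 1
        rw [hofn]
        exact Stmt14Aux.lev_set_le _ _ _
      exact this.trans hr
    · have : editDist t v ≤ editDist s t := by
        show levenshtein Levenshtein.defaultCost (List.ofFn t) (List.ofFn v) ≤ _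
        rw [Stmt14Aux.lev_comm, hofn]
        exact hgood _
      exact this.trans hst
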